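/- Let C ⊆ ℝ^m be a nonempty closed convex set, let W̃ : ℝ^m → ℝ^n and L : ℝ^n → ℝ^k be linear maps, let N be a norm on ℝ^k satisfying N(y) ≥ ‖y‖₂ for all y ∈ ℝ^k, define J : ℝ^n → ℝ by J(f) = N(L f), and let f₀ ∈ ℝ^n. Assume there exists ε > 0 such that ‖L(W̃ α)‖₂ ≥ ε ‖α‖₂ for all α ∈ C. Then the minimization problem min_{α ∈ C} J(f₀ + W̃ α) has at least one solution, i.e., there exists α* ∈ C such that J(f₀ + W̃ α*) ≤ J(f₀ + W̃ α) for all α ∈ C. -/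

import Mathlib

/-- Existence of a minimizer for the variational wavelet
inpainting model `min_{α ∈ C} J(f₀ + W̃ α)` with `J f = N (L f)`, where `C` is a
nonempty closed convex subset of `ℝ^m`, `W̃` and `L` are linear maps, `N` is a
norm dominating the Euclidean norm, and the coercivity condition (4.1)
`‖L (W̃ α)‖₂ ≥ ε ‖α‖₂` holds on `C`. -/
theorem existence_of_minimizer {m n k : ℕ}
    (C : Set (EuclideanSpace ℝ (Fin m)))
    (hCne : C.Nonempty) (hCclosed : IsClosed C) (hCconvex : Convex ℝ C)
    (Wt : EuclideanSpace ℝ (Fin m) →ₗ[ℝ] EuclideanSpace ℝ (Fin n))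
    (L : EuclideanSpace ℝ (Fin n) →ₗ[ℝ] EuclideanSpace ℝ (Fin k))
    (N : EuclideanSpace ℝ (Fin k) → ℝ)
    (hN_tri : ∀ y z, N (y + z) ≤ N y + N z)
    (hN_smul : ∀ (c : ℝ) (y : EuclideanSpace ℝ (Fin k)), N (c • y) = |c| * N y)
    (hN_ge : ∀ y, ‖y‖ ≤ N y)
    (J : EuclideanSpace ℝ (Fin n) → ℝ)
    (hJ : ∀ f, J f = N (L f))
    (f₀ : EuclideanSpace ℝ (Fin n))
    (ε : ℝ) (hε : 0 < ε)
    (hcoer : ∀ α ∈ C, ε * ‖α‖ ≤ ‖L (Wt α)‖) :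
    ∃ αstar ∈ C, ∀ α ∈ C, J (f₀ + Wt αstar) ≤ J (f₀ + Wt α) := by
  have hN_zero : N 0 = 0 := by
    have := hN_smul 0 0
    simpa using this
  -- N is bounded above by a multiple of the norm
  obtain ⟨c, hc0, hc⟩ : ∃ c : ℝ, 0 ≤ c ∧ ∀ y, N y ≤ c * ‖y‖ := by
    classical
    set b := EuclideanSpace.basisFun (Fin k) ℝ
    refine ⟨∑ i : Fin k, N (b i), Finset.sum_nonneg fun i _ =>
      le_trans (norm_nonneg _) (hN_ge (b i)), fun y => ?_⟩
    have hrepr : y = ∑ i : Fin k, y i • b i := by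
      have := b.sum_repr y
      simpa [b, EuclideanSpace.basisFun_repr] using this.symm
    calc N y = N (∑ i : Fin k, y i • b i) := by rw [← hrepr]
      _ ≤ ∑ i : Fin k, N (y i • b i) :=
          Finset.le_sum_of_subadditive N hN_zero.le hN_tri _ _
      _ = ∑ i : Fin k, |y i| * N (b i) := by
          refine Finset.sum_congr rfl fun i _ => ?_
          exact hN_smul (y i) (b i)
      _ ≤ ∑ i : Fin k, ‖y‖ * N (b i) := by
          refine Finset.sum_le_sum fun i _ => ?_
          have h1 : |y i| ≤ ‖y‖ := by
            rw [EuclideanSpace.norm_eq]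
            rw [← Real.sqrt_sq_eq_abs]
            apply Real.sqrt_le_sqrt
            have := Finset.single_le_sum (f := fun j => ‖y j‖ ^ 2)
              (fun j _ => sq_nonneg _) (Finset.mem_univ i)
            simpa [Real.norm_eq_abs, sq_abs] using this
          have h2 : 0 ≤ N (b i) := le_trans (norm_nonneg _) (hN_ge (b i))
          exact mul_le_mul_of_nonneg_right h1 h2
      _ = (∑ i : Fin k, N (b i)) * ‖y‖ := by
          rw [Finset.sum_mul]
          exact Finset.sum_congr rfl fun i _ => mul_comm _ _
  -- N is continuous
  have hNcont : Continuous N := by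
    apply (LipschitzWith.of_dist_le_mul (K := c.toNNReal) (f := N) ?_).continuous
    intro a b
    have key : ∀ u v : EuclideanSpace ℝ (Fin k), N u - N v ≤ c * ‖u - v‖ := by
      intro u v
      have h1 : N u ≤ N (u - v) + N v := by
        have := hN_tri (u - v) v
        simpa using this
      have h2 : N (u - v) ≤ c * ‖u - v‖ := hc _
      linarith
    rw [Real.dist_eq, dist_eq_norm]
    have h1 := key a b
    have h2 := key b a
    rw [abs_le]
    constructor
    · have : ‖b - a‖ = ‖a - b‖ := by rw [norm_sub_rev]
      rw [this] at h2
      have : (c.toNNReal : ℝ) = c := Real.coe_toNNReal c hc0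
      linarith [this ▸ h2]
    · have : (c.toNNReal : ℝ) = c := Real.coe_toNNReal c hc0
      linarith [this ▸ h1]
  -- the objective is continuous
  set φ : EuclideanSpace ℝ (Fin m) → ℝ := fun α => J (f₀ + Wt α) with hφ
  have hφcont : Continuous φ := by
    have hW : Continuous fun α : EuclideanSpace ℝ (Fin m) => Wt α :=
      Wt.continuous_of_finiteDimensional
    have hL : Continuous fun f : EuclideanSpace ℝ (Fin n) => L f :=
      L.continuous_of_finiteDimensional
    have : φ = fun α => N (L (f₀ + Wt α)) := by
      funext α; simp [hφ, hJ]
    rw [this]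
    exact hNcont.comp (hL.comp (continuous_const.add hW))
  obtain ⟨α₀, hα₀⟩ := hCne
  set M := φ α₀ with hM
  set R : ℝ := max ‖α₀‖ ((M + ‖L f₀‖ + 1) / ε) with hR
  -- coercivity lower bound on φ
  have hlow : ∀ α ∈ C, ε * ‖α‖ - ‖L f₀‖ ≤ φ α := by
    intro α hα
    have h1 : ‖L (f₀ + Wt α)‖ ≤ φ α := by
      simp only [hφ, hJ]; exact hN_ge _
    have h2 : ‖L (Wt α)‖ ≤ ‖L (f₀ + Wt α)‖ + ‖L f₀‖ := by
      have e : L (Wt α) = L (f₀ + Wt α) - L f₀ := by simp [map_add]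
      rw [e]
      exact norm_sub_le _ _
    have h3 := hcoer α hα
    linarith
  -- compact sublevel set
  set K := C ∩ Metric.closedBall (0 : EuclideanSpace ℝ (Fin m)) R with hK
  have hKcompact : IsCompact K :=
    (Metric.isCompact_of_isClosed_isBounded
      (hCclosed.inter Metric.isClosed_closedBall)
      (Metric.isBounded_closedBall.subset Set.inter_subset_right))
  have hKne : K.Nonempty := ⟨α₀, hα₀, by
    simp only [Metric.mem_closedBall, dist_zero_right]
    exact le_max_left _ _⟩
  obtain ⟨αstar, hαstarK, hmin⟩ := hKcompact.exists_isMinOn hKne hφcont.continuousOn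
  refine ⟨αstar, hαstarK.1, fun α hα => ?_⟩
  by_cases hball : ‖α‖ ≤ R
  · exact hmin ⟨hα, by simpa [Metric.mem_closedBall, dist_zero_right] using hball⟩
  · push_neg at hball
    have hstar_le : φ αstar ≤ M := hmin ⟨hα₀, by
      simp only [Metric.mem_closedBall, dist_zero_right]; exact le_max_left _ _⟩
    have hεR : M + ‖L f₀‖ + 1 ≤ ε * R := by
      have : (M + ‖L f₀‖ + 1) / ε ≤ R := le_max_right _ _
      calc M + ‖L f₀‖ + 1 = ε * ((M + ‖L f₀‖ + 1) / ε) := by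
            field_simp
        _ ≤ ε * R := by nlinarith
    have h1 : ε * R < ε * ‖α‖ := by nlinarith
    have h2 := hlow α hα
    show φ αstar ≤ φ α
    linarith
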